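/- With the pointwise hypersurface model below, suppose β ≠ 0, δ = 0, and the structure Jacobi operator l is pseudo-parallel with function value L ∈ ℝ. Then μ(αμ + c/4) = 0 (relation (4.6) of the paper, obtained from the pseudo-parallelism condition with X = U, Y = φU, Z = ξ). -/

import Mathlib

open scoped RealInnerProductSpace

/-- Relation (4.6): if `β ≠ 0`, `δ = 0` and the structure Jacobi operator is pseudo-parallel
with function value `L`, then `μ(αμ + c/4) = 0`. -/
theorem pseudo_parallel_mu_relation
    {V : Type*} [NormedAddCommGroup V] [InnerProductSpace ℝ V]
    (hdim : Module.finrank ℝ V = 3)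
    (u w x : V) (hon : Orthonormal ℝ ![u, w, x])
    (φ : V →ₗ[ℝ] V) (hφu : φ u = w) (hφw : φ w = -u) (hφx : φ x = 0)
    (A : V →ₗ[ℝ] V) (hA : ∀ X Y : V, ⟪A X, Y⟫ = ⟪X, A Y⟫)
    (α β γ δ μ c L : ℝ)
    (hAu : A u = γ • u + δ • w + β • x)
    (hAw : A w = δ • u + μ • w)
    (hAx : A x = α • x + β • u)
    (R : V → V → V → V)
    (hR : ∀ X Y Z : V, R X Y Z =
      (c / 4) • (⟪Y, Z⟫ • X - ⟪X, Z⟫ • Y + ⟪φ Y, Z⟫ • φ X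
        - ⟪φ X, Z⟫ • φ Y - (2 * ⟪φ X, Y⟫) • φ Z)
      + ⟪A Y, Z⟫ • A X - ⟪A X, Z⟫ • A Y)
    (l : V → V) (hl : ∀ X : V, l X = R X x x)
    (hpp : ∀ X Y Z : V,
      R X Y (l Z) - l (R X Y Z)
        = L • ((⟪Y, l Z⟫ • X - ⟪l Z, X⟫ • Y)
            - l (⟪Y, Z⟫ • X - ⟪Z, X⟫ • Y)))
    (hβ : β ≠ 0)
    (hδ : δ = 0) :
    μ * (α * μ + c / 4) = 0 := by
  subst hδ
  have o := orthonormal_iff_ite.mp hon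
  have huu : ⟪u, u⟫ = 1 := by simpa using o 0 0
  have huw : ⟪u, w⟫ = 0 := by simpa using o 0 1
  have hux : ⟪u, x⟫ = 0 := by simpa using o 0 2
  have hwu : ⟪w, u⟫ = 0 := by simpa using o 1 0
  have hww : ⟪w, w⟫ = 1 := by simpa using o 1 1
  have hwx : ⟪w, x⟫ = 0 := by simpa using o 1 2
  have hxu : ⟪x, u⟫ = 0 := by simpa using o 2 0
  have hxw : ⟪x, w⟫ = 0 := by simpa using o 2 1
  have hxx : ⟪x, x⟫ = 1 := by simpa using o 2 2
  simp only [zero_smul, zero_add, add_zero] at hAu hAw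
  have isimp : ∀ X : V, True := fun _ => trivial
  have hlx : l x = 0 := by
    rw [hl, hR]
    simp [hφx, hAx, inner_add_left, inner_add_right, real_inner_smul_left,
      real_inner_smul_right, huu, huw, hux, hwu, hww, hwx, hxu, hxw, hxx]
  have hl0 : l 0 = 0 := by
    rw [hl, hR]
    simp
  have h1 : R u w x = -((β * μ) • w) := by
    rw [hR]
    simp [hφu, hφw, hφx, hAu, hAw, hAx, inner_add_left, inner_add_right,
      inner_neg_left, inner_neg_right, real_inner_smul_left, real_inner_smul_right,
      huu, huw, hux, hwu, hww, hwx, hxu, hxw, hxx]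
    rw [← real_inner_self_eq_norm_sq, hxx]
    module
  have h2 : l (R u w x) = -((β * μ * (c / 4 + α * μ)) • w) := by
    rw [h1, hl, hR]
    simp [hφu, hφw, hφx, hAu, hAw, hAx, inner_add_left, inner_add_right,
      inner_neg_left, inner_neg_right, real_inner_smul_left, real_inner_smul_right,
      huu, huw, hux, hwu, hww, hwx, hxu, hxw, hxx, map_neg, map_smul]
    rw [← real_inner_self_eq_norm_sq, hxx]
    module
  have key := hpp u w x
  rw [hlx, hwx, hxu] at key
  simp only [zero_smul, sub_zero, zero_sub, hl0, inner_zero_right, inner_zero_left,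
    smul_zero, sub_self, neg_eq_zero] at key
  -- key should now say something like R u w 0 - l (R u w x) = 0
  have hRuw0 : R u w 0 = 0 := by
    rw [hR]; simp
  rw [hRuw0, h2] at key
  have hkey : (β * μ * (c / 4 + α * μ)) • w = (0 : V) := by
    simpa using key
  have hwne : w ≠ 0 := by
    intro h; rw [h, inner_zero_left] at hww; norm_num at hww
  rcases smul_eq_zero.mp hkey with h | h
  · have : μ * (α * μ + c / 4) = (β * μ * (c / 4 + α * μ)) / β := by
      field_simp; ring
    rw [this, h]; simp
  · exact absurd h hwne
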